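/- Let F : ℝ^d → ℝ be ℓ-weakly convex with ℓ > 0, let X ⊆ ℝ^d be nonempty, closed and convex, set ρ = 2ℓ and let 0 < η ≤ 1/ρ. Fix x ∈ X, and let g be a square-integrable random vector on a probability space with E[g] ∈ ∂F(x) and E‖g‖² ≤ G_F². Set x⁺ := Π_X(x − η g) and x̂ := prox_{Φ/ρ}(x), where Φ := F + δ_X. Then E‖x⁺ − x̂‖² ≤ (1 − ηρ)‖x − x̂‖² + 4 G_F² η². -/

import Mathlib

open MeasureTheory
open scoped RealInnerProductSpace

noncomputable section

set_option maxHeartbeats 1000000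

/-- `q` is the Euclidean projection of `p` onto `X`. -/
def IsProjection {d : ℕ} (X : Set (EuclideanSpace ℝ (Fin d))) (p q : EuclideanSpace ℝ (Fin d)) : Prop :=
  q ∈ X ∧ ∀ y ∈ X, ‖q - p‖ ≤ ‖y - p‖

/-- `F` is `ℓ`-weakly convex: `x ↦ F x + ℓ/2 ‖x‖²` is convex on `ℝ^d`. -/
def WeaklyConvex {d : ℕ} (ℓ : ℝ) (F : EuclideanSpace ℝ (Fin d) → ℝ) : Prop :=
  ConvexOn ℝ Set.univ fun x => F x + ℓ / 2 * ‖x‖ ^ 2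

/-- The subdifferential of an `ℓ`-weakly convex function `F` at `x`. -/
def WCSubdiff {d : ℕ} (ℓ : ℝ) (F : EuclideanSpace ℝ (Fin d) → ℝ) (x : EuclideanSpace ℝ (Fin d)) : Set (EuclideanSpace ℝ (Fin d)) :=
  {g | ∀ y, F x + ⟪g, y - x⟫ - ℓ / 2 * ‖y - x‖ ^ 2 ≤ F y}

/-- `q = prox_{Φ/ρ}(p)`, i.e. `q` minimizes `y ↦ F y + ρ/2 ‖y - p‖²` over `X`. -/
def IsProx {d : ℕ} (X : Set (EuclideanSpace ℝ (Fin d))) (F : EuclideanSpace ℝ (Fin d) → ℝ) (ρ : ℝ) (p q : EuclideanSpace ℝ (Fin d)) : Prop :=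
  q ∈ X ∧ ∀ y ∈ X, F q + ρ / 2 * ‖q - p‖ ^ 2 ≤ F y + ρ / 2 * ‖y - p‖ ^ 2


lemma proj_inner {d : ℕ} {X : Set (EuclideanSpace ℝ (Fin d))} (hX : Convex ℝ X)
    {p q : EuclideanSpace ℝ (Fin d)} (h : IsProjection X p q) :
    ∀ y ∈ X, ⟪p - q, y - q⟫ ≤ 0 := by
  have : Nonempty X := ⟨⟨q, h.1⟩⟩
  have hbdd : BddBelow (Set.range fun w : X => ‖p - (w : EuclideanSpace ℝ (Fin d))‖) := by
    refine ⟨0, ?_⟩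
    rintro b ⟨w, rfl⟩
    exact norm_nonneg _
  have heq : ‖p - q‖ = ⨅ w : X, ‖p - (w : EuclideanSpace ℝ (Fin d))‖ := by
    apply le_antisymm
    · apply le_ciInf
      intro w
      have := h.2 w w.2
      rwa [norm_sub_rev q p, norm_sub_rev (w : EuclideanSpace ℝ (Fin d)) p] at this
    · exact ciInf_le hbdd ⟨q, h.1⟩
  exact (norm_eq_iInf_iff_real_inner_le_zero hX h.1).mp heq

lemma proj_dist_le {d : ℕ} {X : Set (EuclideanSpace ℝ (Fin d))} (hX : Convex ℝ X)
    {p q : EuclideanSpace ℝ (Fin d)} (h : IsProjection X p q) {y : EuclideanSpace ℝ (Fin d)}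
    (hy : y ∈ X) : ‖q - y‖ ≤ ‖p - y‖ := by
  have h1 : ⟪p - q, y - q⟫ ≤ 0 := proj_inner hX h y hy
  have key : ‖p - y‖ ^ 2 = ‖p - q‖ ^ 2 - 2 * ⟪p - q, y - q⟫ + ‖q - y‖ ^ 2 := by
    have hpy : p - y = (p - q) - (y - q) := by abel
    rw [hpy, norm_sub_sq_real, norm_sub_rev y q]
  nlinarith [sq_nonneg ‖p - q‖, norm_nonneg (q - y), norm_nonneg (p - y)]

lemma proj_nonexpansive {d : ℕ} {X : Set (EuclideanSpace ℝ (Fin d))} (hX : Convex ℝ X)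
    {p₁ q₁ p₂ q₂ : EuclideanSpace ℝ (Fin d)} (h₁ : IsProjection X p₁ q₁)
    (h₂ : IsProjection X p₂ q₂) : ‖q₁ - q₂‖ ≤ ‖p₁ - p₂‖ := by
  have a := proj_inner hX h₁ q₂ h₂.1
  have b := proj_inner hX h₂ q₁ h₁.1
  have key : ⟪p₁ - p₂, q₁ - q₂⟫ = ⟪p₁ - q₁, q₁ - q₂⟫ + ⟪q₁ - q₂, q₁ - q₂⟫ + ⟪q₂ - p₂, q₁ - q₂⟫ := by
    rw [← inner_add_left, ← inner_add_left]
    congr 1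
    abel
  have e1 : ⟪p₁ - q₁, q₁ - q₂⟫ = -⟪p₁ - q₁, q₂ - q₁⟫ := by
    rw [show q₁ - q₂ = -(q₂ - q₁) by abel, inner_neg_right]
  have e2 : ⟪q₂ - p₂, q₁ - q₂⟫ = -⟪p₂ - q₂, q₁ - q₂⟫ := by
    rw [show q₂ - p₂ = -(p₂ - q₂) by abel, inner_neg_left]
  have hsq : ‖q₁ - q₂‖ ^ 2 ≤ ⟪p₁ - p₂, q₁ - q₂⟫ := by
    rw [key, e1, e2, real_inner_self_eq_norm_sq]
    linarith
  have hcs := real_inner_le_norm (p₁ - p₂) (q₁ - q₂)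
  nlinarith [norm_nonneg (q₁ - q₂), norm_nonneg (p₁ - p₂)]

/-- `F` is `ℓ`-weakly convex: `x ↦ F x + ℓ/2 ‖x‖²` is convex on `ℝ^d`. -/

lemma combo_norm_sq {d : ℕ} (a b : EuclideanSpace ℝ (Fin d)) (t : ℝ) :
    ‖(1 - t) • a + t • b‖ ^ 2 = (1 - t) * ‖a‖ ^ 2 + t * ‖b‖ ^ 2 - t * (1 - t) * ‖a - b‖ ^ 2 := by
  simp only [← real_inner_self_eq_norm_sq, real_inner_add_add_self, real_inner_sub_sub_self,
    real_inner_smul_left, real_inner_smul_right]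
  ring

lemma prox_growth {d : ℕ} {X : Set (EuclideanSpace ℝ (Fin d))} (hXcvx : Convex ℝ X)
    {F : EuclideanSpace ℝ (Fin d) → ℝ} {ℓ ρ : ℝ} (hℓ : 0 < ℓ) (hρ : ρ = 2 * ℓ)
    (hWC : WeaklyConvex ℓ F) {x xhat : EuclideanSpace ℝ (Fin d)} (hx : x ∈ X)
    (hxhat : IsProx X F ρ x xhat) :
    F xhat + 3 * ℓ / 2 * ‖xhat - x‖ ^ 2 ≤ F x := by
  set S := ‖xhat - x‖ ^ 2 with hS
  have hS0 : 0 ≤ S := sq_nonneg _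
  have key : ∀ t : ℝ, 0 < t → t ≤ 1 → F xhat + 3 * ℓ / 2 * S - ℓ * t / 2 * S ≤ F x := by
    intro t ht ht1
    set yt := (1 - t) • xhat + t • x with hyt
    have hmem : yt ∈ X := hXcvx hxhat.1 hx (by linarith) ht.le (by ring)
    have hA := hxhat.2 yt hmem
    have hB := hWC.2 (Set.mem_univ xhat) (Set.mem_univ x) (by linarith : (0:ℝ) ≤ 1 - t) ht.le (by ring)
    simp only [smul_eq_mul] at hB
    have hn1 : ‖yt‖ ^ 2 = (1 - t) * ‖xhat‖ ^ 2 + t * ‖x‖ ^ 2 - t * (1 - t) * S := by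
      rw [hyt, combo_norm_sq]
    have hn2 : ‖yt - x‖ ^ 2 = (1 - t) ^ 2 * S := by
      have : yt - x = (1 - t) • (xhat - x) := by rw [hyt]; module
      rw [this, norm_smul, mul_pow, Real.norm_eq_abs, sq_abs]
    have hxx : ‖xhat - x‖ ^ 2 = S := rfl
    have hmul : t * (F xhat + 3 * ℓ / 2 * S - ℓ * t / 2 * S) ≤ t * F x := by
      nlinarith [hA, hB]
    exact le_of_mul_le_mul_left hmul ht
  refine le_of_forall_pos_le_add ?_
  intro ε hε
  set t := min 1 (2 * ε / (ℓ * S + 1)) with htdef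
  have hpos : 0 < ℓ * S + 1 := by positivity
  have ht : 0 < t := lt_min one_pos (by positivity)
  have ht1 : t ≤ 1 := min_le_left _ _
  have ht2 : t ≤ 2 * ε / (ℓ * S + 1) := min_le_right _ _
  have ht3 : t * (ℓ * S + 1) ≤ 2 * ε := by
    rw [← le_div_iff₀ hpos]; exact ht2
  have hsmall : ℓ * t / 2 * S ≤ ε := by nlinarith [mul_nonneg hℓ.le hS0]
  have := key t ht ht1
  linarith

/-- Lemma 4.1 (Lemma 3.3 in Davis--Drusvyatskiy): one-step contraction of the stochastic
subgradient step towards the proximal point. -/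
theorem sgm_one_step_contraction {d : ℕ}
    {Ω : Type} [MeasurableSpace Ω] (μ : Measure Ω) [IsProbabilityMeasure μ]
    (X : Set (EuclideanSpace ℝ (Fin d))) (hXne : X.Nonempty) (hXcl : IsClosed X) (hXcvx : Convex ℝ X)
    (F : EuclideanSpace ℝ (Fin d) → ℝ) (ℓ ρ η GF : ℝ) (hℓ : 0 < ℓ) (hρ : ρ = 2 * ℓ)
    (hη0 : 0 < η) (hη : η ≤ 1 / ρ)
    (hWC : WeaklyConvex ℓ F)
    (x : EuclideanSpace ℝ (Fin d)) (hx : x ∈ X)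
    (g : Ω → EuclideanSpace ℝ (Fin d)) (hg2 : MemLp g 2 μ)
    (hmean : (∫ ω, g ω ∂μ) ∈ WCSubdiff ℓ F x)
    (hGF : (∫ ω, ‖g ω‖ ^ 2 ∂μ) ≤ GF ^ 2)
    (xplus : Ω → EuclideanSpace ℝ (Fin d)) (hxplus : ∀ ω, IsProjection X (x - η • g ω) (xplus ω))
    (xhat : EuclideanSpace ℝ (Fin d)) (hxhat : IsProx X F ρ x xhat) :
    (∫ ω, ‖xplus ω - xhat‖ ^ 2 ∂μ) ≤ (1 - η * ρ) * ‖x - xhat‖ ^ 2 + 4 * GF ^ 2 * η ^ 2 := by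
  have hgint : Integrable g μ := hg2.integrable one_le_two
  have hnormsq : Integrable (fun ω => ‖g ω‖ ^ 2) μ := hg2.norm.integrable_sq
  have hIin : Integrable (fun ω => ⟪x - xhat, g ω⟫) μ := hgint.const_inner (x - xhat)
  -- the projection map
  have hex : ∀ u : EuclideanSpace ℝ (Fin d), ∃ v, IsProjection X u v := by
    intro u
    obtain ⟨v, hvX, hv⟩ := exists_norm_eq_iInf_of_complete_convex hXne hXcl.isComplete hXcvx u
    have : Nonempty X := ⟨⟨v, hvX⟩⟩
    refine ⟨v, hvX, fun y hy => ?_⟩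
    have hbdd : BddBelow (Set.range fun w : X => ‖u - (w : EuclideanSpace ℝ (Fin d))‖) := by
      refine ⟨0, ?_⟩
      rintro b ⟨w, rfl⟩
      exact norm_nonneg _
    have h2 : ‖u - v‖ ≤ ‖u - y‖ := hv ▸ ciInf_le hbdd ⟨y, hy⟩
    rwa [norm_sub_rev u v, norm_sub_rev u y] at h2
  choose P hP using hex
  have hxpeq : ∀ ω, xplus ω = P (x - η • g ω) := by
    intro ω
    have h0 := proj_nonexpansive hXcvx (hxplus ω) (hP (x - η • g ω))
    rw [sub_self, norm_zero] at h0
    exact sub_eq_zero.mp (norm_le_zero_iff.mp h0)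
  have hPlip : LipschitzWith 1 P := by
    apply LipschitzWith.of_dist_le_mul
    intro u v
    simpa [dist_eq_norm, one_mul] using proj_nonexpansive hXcvx (hP u) (hP v)
  have hf_meas : AEStronglyMeasurable (fun ω => ‖xplus ω - xhat‖ ^ 2) μ := by
    have hc : Continuous fun u : EuclideanSpace ℝ (Fin d) => ‖P (x - η • u) - xhat‖ ^ 2 := by
      apply Continuous.pow
      apply Continuous.norm
      exact (hPlip.continuous.comp (continuous_const.sub (continuous_id.const_smul η))).sub continuous_const
    have h1 := hc.comp_aestronglyMeasurable hg2.1
    have h2 : (fun ω => ‖P (x - η • g ω) - xhat‖ ^ 2) = fun ω => ‖xplus ω - xhat‖ ^ 2 :=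
      funext fun ω => by rw [hxpeq ω]
    rwa [h2] at h1
  have hrw : ∀ ω, ‖x - η • g ω - xhat‖ ^ 2
      = ‖x - xhat‖ ^ 2 - 2 * η * ⟪x - xhat, g ω⟫ + η ^ 2 * ‖g ω‖ ^ 2 := by
    intro ω
    have h0 : x - η • g ω - xhat = (x - xhat) - η • g ω := by abel
    rw [h0, norm_sub_sq_real, real_inner_smul_right, norm_smul, mul_pow, Real.norm_eq_abs, sq_abs]
    ring
  have hfun : (fun ω => ‖x - η • g ω - xhat‖ ^ 2)
      = fun ω => ‖x - xhat‖ ^ 2 - 2 * η * ⟪x - xhat, g ω⟫ + η ^ 2 * ‖g ω‖ ^ 2 := funext hrw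
  have hh_int : Integrable (fun ω => ‖x - η • g ω - xhat‖ ^ 2) μ := by
    rw [hfun]
    exact ((integrable_const _).sub (hIin.const_mul _)).add (hnormsq.const_mul _)
  have hbound : ∀ ω, ‖xplus ω - xhat‖ ^ 2 ≤ ‖x - η • g ω - xhat‖ ^ 2 := by
    intro ω
    have := proj_dist_le hXcvx (hxplus ω) hxhat.1
    exact pow_le_pow_left₀ (norm_nonneg _) this 2
  have hf_int : Integrable (fun ω => ‖xplus ω - xhat‖ ^ 2) μ := by
    refine hh_int.mono hf_meas (Filter.Eventually.of_forall fun ω => ?_)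
    rw [Real.norm_eq_abs, Real.norm_eq_abs, abs_of_nonneg (by positivity),
      abs_of_nonneg (by positivity)]
    exact hbound ω
  have step1 : (∫ ω, ‖xplus ω - xhat‖ ^ 2 ∂μ) ≤ ∫ ω, ‖x - η • g ω - xhat‖ ^ 2 ∂μ :=
    integral_mono hf_int hh_int hbound
  have step2 : (∫ ω, ‖x - η • g ω - xhat‖ ^ 2 ∂μ)
      = ‖x - xhat‖ ^ 2 - 2 * η * ⟪x - xhat, (∫ ω, g ω ∂μ)⟫ + η ^ 2 * ∫ ω, ‖g ω‖ ^ 2 ∂μ := by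
    have i1 : Integrable (fun ω => ‖x - xhat‖ ^ 2 - 2 * η * ⟪x - xhat, g ω⟫) μ :=
      (integrable_const _).sub (hIin.const_mul _)
    have i2 : Integrable (fun ω => η ^ 2 * ‖g ω‖ ^ 2) μ := hnormsq.const_mul _
    have i3 : Integrable (fun ω : Ω => ‖x - xhat‖ ^ 2) μ := integrable_const _
    have i4 : Integrable (fun ω => 2 * η * ⟪x - xhat, g ω⟫) μ := hIin.const_mul _
    rw [hfun, integral_add i1 i2, integral_sub i3 i4, integral_const,
      integral_const_mul, integral_const_mul, integral_inner hgint]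
    simp [measure_univ]
  have hsub := hmean xhat
  have hgrow := prox_growth hXcvx hℓ hρ hWC hx hxhat
  have hinner : ℓ * ‖xhat - x‖ ^ 2 ≤ ⟪x - xhat, (∫ ω, g ω ∂μ)⟫ := by
    have h0 : ⟪x - xhat, (∫ ω, g ω ∂μ)⟫ = -⟪(∫ ω, g ω ∂μ), xhat - x⟫ := by
      rw [real_inner_comm, show x - xhat = -(xhat - x) by abel, inner_neg_right]
    rw [h0]
    linarith
  have hInorm : 0 ≤ ∫ ω, ‖g ω‖ ^ 2 ∂μ := integral_nonneg fun ω => sq_nonneg _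
  have hG0 : 0 ≤ GF ^ 2 := le_trans hInorm hGF
  have hnrev : ‖xhat - x‖ = ‖x - xhat‖ := norm_sub_rev _ _
  have p1 : η * (ℓ * ‖xhat - x‖ ^ 2) ≤ η * ⟪x - xhat, (∫ ω, g ω ∂μ)⟫ :=
    mul_le_mul_of_nonneg_left hinner hη0.le
  have p2 : η ^ 2 * (∫ ω, ‖g ω‖ ^ 2 ∂μ) ≤ η ^ 2 * GF ^ 2 :=
    mul_le_mul_of_nonneg_left hGF (sq_nonneg η)
  have p3 : 0 ≤ η ^ 2 * GF ^ 2 := mul_nonneg (sq_nonneg η) hG0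
  rw [hnrev] at p1
  subst hρ
  nlinarith [step1, step2]
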